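/- Let f : ℕ → ℂ with f(1) > 0 (real and positive) and f(n) ≥ 0 (real and nonnegative) for all n, and suppose the L-series of f, L(f, s) = ∑_{n≥1} f(n) n^{−s}, converges somewhere and extends to an entire function F with F(s) = L(f,s) on the region of convergence. Then F takes positive real values at every real number. -/
import Mathlib


open LSeries
open scoped ComplexOrder

theorem LSeries_entire_extension_positive_on_reals {f : ℕ → ℂ}
    (hf₀ : 0 ≤ f) (hf₁ : 0 < f 1) {F : ℂ → ℂ} (hF : Differentiable ℂ F)
    {x : ℝ} (hx : abscissaOfAbsConv f ≤ x)
    (hF' : Set.EqOn F (LSeries f) {s : ℂ | x < s.re}) :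
    ∀ y : ℝ, 0 < F y :=
  fun y => LSeries.positive_of_differentiable_of_eqOn hf₀ hf₁ hF hx hF' y
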